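/- For all integers k ≥ 2 and ℓ ≥ 0, the number of inversions of the digit-reversal permutation R_k(ℓ) equals (k^{2ℓ} − ℓ·k^{ℓ+1} + (ℓ−1)·k^ℓ)/4. -/

import Mathlib

/-- `digitRev k ℓ n` : the radix-`k` digit reversal of `n`, viewed as a string of exactly
`ℓ` base-`k` digits (padded with leading zeros). -/
def digitRev (k : ℕ) : ℕ → ℕ → ℕ
  | 0, _ => 0
  | ℓ + 1, n => n % k * k ^ ℓ + digitRev k ℓ (n / k)

open Finset

def invCnt (k ℓ : ℕ) : ℕ :=
  ((Finset.range (k ^ ℓ) ×ˢ Finset.range (k ^ ℓ)).filter fun q =>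
    q.1 < q.2 ∧ digitRev k ℓ q.2 < digitRev k ℓ q.1).card

def clt (M : ℕ) : ℕ := ((Finset.range M ×ˢ Finset.range M).filter fun q => q.1 < q.2).card

lemma digitRev_lt (k : ℕ) (hk : 0 < k) : ∀ ℓ n, digitRev k ℓ n < k ^ ℓ := by
  intro ℓ
  induction ℓ with
  | zero => intro n; simp [digitRev]
  | succ ℓ ih =>
    intro n
    have h1 := ih (n / k)
    have h2 : n % k < k := Nat.mod_lt _ hk
    have h3 : (n % k + 1) * k ^ ℓ ≤ k * k ^ ℓ := Nat.mul_le_mul_right _ (by omega)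
    have hd : digitRev k (ℓ+1) n = n % k * k ^ ℓ + digitRev k ℓ (n / k) := rfl
    rw [hd, pow_succ]
    nlinarith

lemma base_lt {k a b r s : ℕ} (hr : r < k) (hs : s < k) :
    k * a + r < k * b + s ↔ a < b ∨ (a = b ∧ r < s) := by
  constructor
  · intro h
    rcases lt_trichotomy a b with h' | h' | h'
    · exact Or.inl h'
    · subst h'; exact Or.inr ⟨rfl, lt_of_add_lt_add_left h⟩
    · exfalso
      have h1 : k * (b + 1) ≤ k * a := Nat.mul_le_mul_left k (by omega)
      have h2 : k * b + s < k * (b + 1) := by rw [Nat.mul_succ]; exact Nat.add_lt_add_left hs _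
      linarith
  · rintro (h | ⟨rfl, h⟩)
    · have h1 : k * (a + 1) ≤ k * b := Nat.mul_le_mul_left k (by omega)
      have h2 : k * a + r < k * (a + 1) := by rw [Nat.mul_succ]; exact Nat.add_lt_add_left hr _
      linarith
    · exact Nat.add_lt_add_left h _

lemma cnt_gt (M : ℕ) : ((Finset.range M ×ˢ Finset.range M).filter fun q => q.2 < q.1).card * 2 = M * (M - 1) := by
  rw [Finset.card_filter, Finset.sum_product]
  have h : ∀ i ∈ Finset.range M, (∑ j ∈ Finset.range M, if j < i then 1 else 0) = i := by
    intro i hi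
    rw [← Finset.card_filter]
    have : (Finset.range M).filter (fun j => j < i) = Finset.range i := by
      ext x; simp at hi ⊢; omega
    rw [this, Finset.card_range]
  rw [Finset.sum_congr rfl h, Finset.sum_range_id_mul_two]

lemma cnt_lt (M : ℕ) : ((Finset.range M ×ˢ Finset.range M).filter fun q => q.1 < q.2).card * 2 = M * (M - 1) := by
  rw [← cnt_gt M]
  congr 1
  apply Finset.card_nbij' (fun q => (q.2, q.1)) (fun q => (q.2, q.1)) <;>
    simp [Set.MapsTo, Finset.mem_filter, Finset.mem_product] <;> tauto


lemma invCnt_succ (k ℓ : ℕ) (hk : 0 < k) :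
    invCnt k (ℓ + 1) = clt (k ^ ℓ) * clt k + k * invCnt k ℓ := by
  set K := k ^ ℓ with hK
  set S : Finset ((ℕ × ℕ) × (ℕ × ℕ)) := (range K ×ˢ range k) ×ˢ (range K ×ˢ range k) with hS
  set c1 : (ℕ × ℕ) × (ℕ × ℕ) → Prop := fun q => q.1.1 < q.2.1 ∧ q.2.2 < q.1.2 with hc1
  set c2 : (ℕ × ℕ) × (ℕ × ℕ) → Prop := fun q =>
    q.1.1 < q.2.1 ∧ q.2.2 = q.1.2 ∧ digitRev k ℓ q.2.1 < digitRev k ℓ q.1.1 with hc2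
  -- Step A : invCnt k (ℓ+1) equals card of T
  have hA : invCnt k (ℓ + 1) =
      (S.filter fun q =>
        (k * q.1.1 + q.1.2 < k * q.2.1 + q.2.2) ∧
        (K * q.2.2 + digitRev k ℓ q.2.1 < K * q.1.2 + digitRev k ℓ q.1.1)).card := by
    apply Finset.card_nbij' (fun q => ((q.1 / k, q.1 % k), (q.2 / k, q.2 % k)))
      (fun q => (k * q.1.1 + q.1.2, k * q.2.1 + q.2.2))
    · intro a ha
      simp only [Finset.mem_coe, invCnt, Finset.mem_filter, Finset.mem_product, Finset.mem_range] at ha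
      obtain ⟨⟨h1, h2⟩, h3, h4⟩ := ha
      have e1 : ∀ m : ℕ, digitRev k (ℓ+1) m = m % k * K + digitRev k ℓ (m / k) := fun m => rfl
      simp only [Finset.mem_coe, hS, Finset.mem_filter, Finset.mem_product, Finset.mem_range]
      refine ⟨⟨⟨?_, Nat.mod_lt _ hk⟩, ?_, Nat.mod_lt _ hk⟩, ?_, ?_⟩
      · rw [Nat.div_lt_iff_lt_mul hk]; rw [pow_succ] at h1; exact h1
      · rw [Nat.div_lt_iff_lt_mul hk]; rw [pow_succ] at h2; exact h2
      · have := Nat.div_add_mod a.1 k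
        have := Nat.div_add_mod a.2 k
        omega
      · rw [e1, e1] at h4
        calc K * (a.2 % k) + digitRev k ℓ (a.2 / k)
            = a.2 % k * K + digitRev k ℓ (a.2 / k) := by ring_nf
          _ < a.1 % k * K + digitRev k ℓ (a.1 / k) := h4
          _ = K * (a.1 % k) + digitRev k ℓ (a.1 / k) := by ring_nf
    · intro a ha
      simp only [Finset.mem_coe, hS, Finset.mem_filter, Finset.mem_product, Finset.mem_range] at ha
      obtain ⟨⟨⟨h1, h2⟩, h3, h4⟩, h5, h6⟩ := ha
      have e1 : ∀ m : ℕ, digitRev k (ℓ+1) m = m % k * K + digitRev k ℓ (m / k) := fun m => rfl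
      simp only [Finset.mem_coe, invCnt, Finset.mem_filter, Finset.mem_product, Finset.mem_range]
      have d1 : (k * a.1.1 + a.1.2) / k = a.1.1 := by
        rw [Nat.mul_add_div hk, Nat.div_eq_of_lt h2, Nat.add_zero]
      have d2 : (k * a.2.1 + a.2.2) / k = a.2.1 := by
        rw [Nat.mul_add_div hk, Nat.div_eq_of_lt h4, Nat.add_zero]
      have m1 : (k * a.1.1 + a.1.2) % k = a.1.2 := by
        rw [Nat.mul_add_mod, Nat.mod_eq_of_lt h2]
      have m2 : (k * a.2.1 + a.2.2) % k = a.2.2 := by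
        rw [Nat.mul_add_mod, Nat.mod_eq_of_lt h4]
      refine ⟨⟨?_, ?_⟩, h5, ?_⟩
      · rw [pow_succ]
        have : k * a.1.1 + a.1.2 < k * (a.1.1 + 1) := by rw [Nat.mul_succ]; omega
        have h1' : k * (a.1.1 + 1) ≤ k * K := Nat.mul_le_mul_left k (by omega)
        calc k * a.1.1 + a.1.2 < k * (a.1.1 + 1) := this
          _ ≤ k * K := h1'
          _ = K * k := Nat.mul_comm _ _
      · rw [pow_succ]
        have : k * a.2.1 + a.2.2 < k * (a.2.1 + 1) := by rw [Nat.mul_succ]; omega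
        have h2' : k * (a.2.1 + 1) ≤ k * K := Nat.mul_le_mul_left k (by omega)
        calc k * a.2.1 + a.2.2 < k * (a.2.1 + 1) := this
          _ ≤ k * K := h2'
          _ = K * k := Nat.mul_comm _ _
      · rw [e1, e1, d1, d2, m1, m2]
        calc a.2.2 * K + digitRev k ℓ a.2.1 = K * a.2.2 + digitRev k ℓ a.2.1 := by ring_nf
          _ < K * a.1.2 + digitRev k ℓ a.1.1 := h6
          _ = a.1.2 * K + digitRev k ℓ a.1.1 := by ring_nf
    · intro a ha
      have := Nat.div_add_mod a.1 k
      have := Nat.div_add_mod a.2 k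
      simp only [Prod.ext_iff]
      omega
    · intro a ha
      simp only [Finset.mem_coe, hS, Finset.mem_filter, Finset.mem_product, Finset.mem_range] at ha
      obtain ⟨⟨⟨h1, h2⟩, h3, h4⟩, _⟩ := ha
      have d1 : (k * a.1.1 + a.1.2) / k = a.1.1 := by
        rw [Nat.mul_add_div hk, Nat.div_eq_of_lt h2, Nat.add_zero]
      have d2 : (k * a.2.1 + a.2.2) / k = a.2.1 := by
        rw [Nat.mul_add_div hk, Nat.div_eq_of_lt h4, Nat.add_zero]
      have m1 : (k * a.1.1 + a.1.2) % k = a.1.2 := by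
        rw [Nat.mul_add_mod, Nat.mod_eq_of_lt h2]
      have m2 : (k * a.2.1 + a.2.2) % k = a.2.2 := by
        rw [Nat.mul_add_mod, Nat.mod_eq_of_lt h4]
      simp [Prod.ext_iff, d1, d2, m1, m2]
  rw [hA]
  have hiff : ∀ q ∈ S, ((k * q.1.1 + q.1.2 < k * q.2.1 + q.2.2) ∧
        (K * q.2.2 + digitRev k ℓ q.2.1 < K * q.1.2 + digitRev k ℓ q.1.1)) ↔ (c1 q ∨ c2 q) := by
    intro q hq
    simp only [hS, Finset.mem_product, Finset.mem_range] at hq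
    obtain ⟨⟨h1, h2⟩, h3, h4⟩ := hq
    have r1 := digitRev_lt k hk ℓ q.1.1
    have r2 := digitRev_lt k hk ℓ q.2.1
    rw [base_lt h2 h4, base_lt r2 r1]
    simp only [hc1, hc2]
    omega
  rw [Finset.filter_congr hiff, Finset.filter_or, Finset.card_union_of_disjoint]
  · congr 1
    · -- card of c1 part
      rw [show clt K * clt k = (((range K ×ˢ range K).filter fun q => q.1 < q.2) ×ˢ
          ((range k ×ˢ range k).filter fun q => q.1 < q.2)).card by
        rw [Finset.card_product]; rfl]
      apply Finset.card_nbij' (fun q => ((q.1.1, q.2.1), (q.2.2, q.1.2)))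
        (fun p => ((p.1.1, p.2.2), (p.1.2, p.2.1)))
      · intro a ha
        simp only [Finset.mem_coe, hS, hc1, Finset.mem_filter, Finset.mem_product, Finset.mem_range] at ha ⊢
        tauto
      · intro a ha
        simp only [Finset.mem_coe, hS, hc1, Finset.mem_filter, Finset.mem_product, Finset.mem_range] at ha ⊢
        tauto
      · intro a ha; rfl
      · intro a ha; rfl
    · -- card of c2 part
      rw [show k * invCnt k ℓ = ((range k) ×ˢ ((range K ×ˢ range K).filter fun q =>
          q.1 < q.2 ∧ digitRev k ℓ q.2 < digitRev k ℓ q.1)).card by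
        rw [Finset.card_product, Finset.card_range]; rfl]
      apply Finset.card_nbij' (fun q => (q.1.2, (q.1.1, q.2.1)))
        (fun p => ((p.2.1, p.1), (p.2.2, p.1)))
      · intro a ha
        simp only [Finset.mem_coe, hS, hc2, Finset.mem_filter, Finset.mem_product, Finset.mem_range] at ha ⊢
        tauto
      · intro a ha
        simp only [Finset.mem_coe, hS, hc2, Finset.mem_filter, Finset.mem_product, Finset.mem_range] at ha ⊢
        tauto
      · intro a ha
        simp only [Finset.mem_coe, hS, hc2, Finset.mem_filter, Finset.mem_product, Finset.mem_range] at ha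
        obtain ⟨-, -, h, -⟩ := ha
        simp [Prod.ext_iff, h]
      · intro a ha; rfl
  · rw [Finset.disjoint_filter]
    intro x hx hx1 hx2
    simp only [hc1, hc2] at hx1 hx2
    omega


lemma four_invCnt (k ℓ : ℕ) (hk : 2 ≤ k) :
    4 * (invCnt k ℓ : ℤ) = (k:ℤ)^(2*ℓ) - (ℓ:ℤ)*(k:ℤ)^(ℓ+1) + ((ℓ:ℤ)-1)*(k:ℤ)^ℓ := by
  induction ℓ with
  | zero =>
    have : invCnt k 0 = 0 := by
      rw [invCnt, Finset.card_eq_zero, Finset.filter_eq_empty_iff]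
      intro x hx
      simp only [pow_zero, Finset.mem_product, Finset.mem_range] at hx
      omega
    rw [this]; ring
  | succ ℓ ih =>
    have h := invCnt_succ k ℓ (by omega)
    have hK1 : 1 ≤ k ^ ℓ := Nat.one_le_pow _ _ (by omega)
    have hcast : (4:ℤ) * invCnt k (ℓ+1) =
        ((clt (k^ℓ) * 2 : ℕ) : ℤ) * ((clt k * 2 : ℕ):ℤ) + k * (4 * invCnt k ℓ) := by
      push_cast [h]; ring
    have e1 : ((k ^ ℓ * (k ^ ℓ - 1) : ℕ) : ℤ) = (k:ℤ)^ℓ * ((k:ℤ)^ℓ - 1) := by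
      rw [Nat.cast_mul, Nat.cast_sub hK1]; push_cast; ring
    have e2 : ((k * (k - 1) : ℕ) : ℤ) = (k:ℤ) * ((k:ℤ) - 1) := by
      rw [Nat.cast_mul, Nat.cast_sub (by omega : 1 ≤ k)]; push_cast; ring
    have c1 : clt (k ^ ℓ) * 2 = k ^ ℓ * (k ^ ℓ - 1) := cnt_lt (k ^ ℓ)
    have c2 : clt k * 2 = k * (k - 1) := cnt_lt k
    rw [hcast, c1, c2, e1, e2, ih]
    push_cast
    ring

/-- The number of inversions of the digit-reversal permutation `R_k(ℓ)` equals
`(k^(2ℓ) - ℓ·k^(ℓ+1) + (ℓ-1)·k^ℓ)/4`. -/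
theorem stmt7 (k ℓ : ℕ) (hk : 2 ≤ k) :
    ((Finset.univ.filter (fun q : Fin (k ^ ℓ) × Fin (k ^ ℓ) =>
        q.1 < q.2 ∧ digitRev k ℓ (q.2 : ℕ) < digitRev k ℓ (q.1 : ℕ))).card : ℤ) =
      ((k : ℤ) ^ (2 * ℓ) - (ℓ : ℤ) * (k : ℤ) ^ (ℓ + 1) + ((ℓ : ℤ) - 1) * (k : ℤ) ^ ℓ) / 4 := by
  have hb : (Finset.univ.filter (fun q : Fin (k ^ ℓ) × Fin (k ^ ℓ) =>
      q.1 < q.2 ∧ digitRev k ℓ (q.2 : ℕ) < digitRev k ℓ (q.1 : ℕ))).card = invCnt k ℓ := by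
    apply Finset.card_nbij (fun q => ((q.1 : ℕ), (q.2 : ℕ)))
    · intro a ha
      simp only [Finset.mem_coe, Finset.mem_filter, Finset.mem_univ, true_and] at ha
      simp only [Finset.mem_coe, invCnt, Finset.mem_filter, Finset.mem_product, Finset.mem_range]
      exact ⟨⟨a.1.isLt, a.2.isLt⟩, ha.1, ha.2⟩
    · intro a _ b _ hab
      simp only [Prod.ext_iff] at hab ⊢
      exact ⟨Fin.ext hab.1, Fin.ext hab.2⟩
    · intro b hb
      simp only [invCnt, Finset.coe_filter, Finset.mem_product, Finset.mem_range,
        Set.mem_setOf_eq] at hb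
      obtain ⟨⟨h1, h2⟩, h3, h4⟩ := hb
      exact ⟨(⟨b.1, h1⟩, ⟨b.2, h2⟩), by
        simp only [Finset.coe_filter, Finset.mem_univ, true_and, Set.mem_setOf_eq]
        exact ⟨h3, h4⟩, rfl⟩
  rw [hb]
  have h := four_invCnt k ℓ hk
  rw [← h, Int.mul_ediv_cancel_left _ (by norm_num)]
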